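/- arXiv:1811.03918 — 2 statements merged into one kernel-verified Lean document; each statement's English description precedes it below -/
import Mathlib

section
/- There exist random variables X, Y, U such that ρ(X;Y|U) < essinf_u ρ(X;Y|U=u). Specifically, if P(U=0)=P(U=1)=1/2, and given U=0 the pair (X,Y) has variances (a,b) and correlation η, while given U=1 it has variances (b,a) and correlation η, with 0<a<b and 0<η≤1, then ρ(X;Y|U=0)=ρ(X;Y|U=1)=η but ρ(X;Y|U) = 2η√(ab)/(a+b) < η. -/
open MeasureTheory ProbabilityTheory

noncomputable section

namespace CondCorr

variable {Ω : Type*} [mΩ : MeasurableSpace Ω]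

/-- `E[var(X | m)]`: the expected conditional variance of `X` given a sub-σ-algebra `m`. -/
def evar (μ : Measure Ω) (m : MeasurableSpace Ω) (X : Ω → ℝ) : ℝ :=
  ∫ ω, (X ω - (μ[X|m]) ω) ^ 2 ∂μ

/-- `E[cov(X, Y | m)]`: the expected conditional covariance given a sub-σ-algebra `m`. -/
def ecov (μ : Measure Ω) (m : MeasurableSpace Ω) (X Y : Ω → ℝ) : ℝ :=
  ∫ ω, (X ω - (μ[X|m]) ω) * (Y ω - (μ[Y|m]) ω) ∂μ

/-- Conditional Pearson correlation given a sub-σ-algebra `m`. -/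
def condPearson (μ : Measure Ω) (m : MeasurableSpace Ω) (X Y : Ω → ℝ) : ℝ :=
  if 0 < evar (mΩ := mΩ) μ m X ∧ 0 < evar (mΩ := mΩ) μ m Y then
    ecov (mΩ := mΩ) μ m X Y / (Real.sqrt (evar (mΩ := mΩ) μ m X) * Real.sqrt (evar (mΩ := mΩ) μ m Y))
  else 0

/-- Conditional correlation ratio `θ(X; Y | U)`. -/
def theta {β γ : Type*} [MeasurableSpace β] [MeasurableSpace γ]
    (μ : Measure Ω) (X : Ω → ℝ) (Y : Ω → β) (U : Ω → γ) : ℝ :=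
  sSup {r | ∃ g : β × γ → ℝ, Measurable g ∧
    MemLp (fun ω => g (Y ω, U ω)) 2 μ ∧
    r = condPearson μ (MeasurableSpace.comap U inferInstance) X
          (fun ω => g (Y ω, U ω))}

/-- Conditional maximal correlation `ρ_m(X; Y | U)`. -/
def rhoM {α β γ : Type*} [MeasurableSpace α] [MeasurableSpace β] [MeasurableSpace γ]
    (μ : Measure Ω) (X : Ω → α) (Y : Ω → β) (U : Ω → γ) : ℝ :=
  sSup {r | ∃ f : α × γ → ℝ, ∃ g : β × γ → ℝ, Measurable f ∧ Measurable g ∧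
    MemLp (fun ω => f (X ω, U ω)) 2 μ ∧ MemLp (fun ω => g (Y ω, U ω)) 2 μ ∧
    r = condPearson μ (MeasurableSpace.comap U inferInstance)
          (fun ω => f (X ω, U ω)) (fun ω => g (Y ω, U ω))}

/-- Unconditional Pearson correlation (conditioning on the trivial σ-algebra). -/
def pearson (μ : Measure Ω) (X Y : Ω → ℝ) : ℝ := condPearson μ ⊥ X Y

/-- Unconditional correlation ratio. -/
def theta₀ {β : Type*} [MeasurableSpace β] (μ : Measure Ω) (X : Ω → ℝ) (Y : Ω → β) : ℝ :=
  theta μ X Y (fun _ => (() : Unit))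

/-- Unconditional maximal correlation. -/
def rhoM₀ {α β : Type*} [MeasurableSpace α] [MeasurableSpace β]
    (μ : Measure Ω) (X : Ω → α) (Y : Ω → β) : ℝ :=
  rhoM μ X Y (fun _ => (() : Unit))

end CondCorr

namespace CondCorr

private lemma memLp_mul_integrable {Ω : Type*} [MeasurableSpace Ω] {μ : Measure Ω}
    {f g : Ω → ℝ} (hf : MemLp f 2 μ) (hg : MemLp g 2 μ) :
    Integrable (fun ω => f ω * g ω) μ := by
  have h1 := (hf.add hg).integrable_sq
  have h2 := hf.integrable_sq
  have h3 := hg.integrable_sq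
  have heq : (fun ω => f ω * g ω) = fun ω => (((f ω + g ω) ^ 2 - f ω ^ 2) - g ω ^ 2) / 2 := by
    funext ω; ring
  rw [heq]
  exact ((h1.sub h2).sub h3).div_const 2

/-- Counterexample: with `P(U=0)=P(U=1)=1/2`, variances `(a,b)` and correlation `η`
given `U=0`, and variances `(b,a)` and correlation `η` given `U=1` (`0<a<b`, `0<η≤1`),
one has `ρ(X;Y|U) = 2η√(ab)/(a+b) < η`. -/
theorem condPearson_lt_event_corr {Ω : Type*} [mΩ : MeasurableSpace Ω] (μ : Measure Ω)
    [IsProbabilityMeasure μ] (a b η : ℝ) (ha : 0 < a) (hab : a < b)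
    (hη : 0 < η) (hη1 : η ≤ 1)
    (X Y U : Ω → ℝ) (hX : Measurable X) (hY : Measurable Y) (hU : Measurable U)
    (hX2 : MemLp X 2 μ) (hY2 : MemLp Y 2 μ)
    (hU01 : ∀ᵐ ω ∂μ, U ω = 0 ∨ U ω = 1)
    (h0 : μ {ω | U ω = 0} = 1/2) (h1 : μ {ω | U ω = 1} = 1/2)
    (hvX0 : variance X (μ[|{ω | U ω = 0}]) = a)
    (hvY0 : variance Y (μ[|{ω | U ω = 0}]) = b)
    (hc0 : ecov (μ[|{ω | U ω = 0}]) ⊥ X Y = η * Real.sqrt (a * b))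
    (hvX1 : variance X (μ[|{ω | U ω = 1}]) = b)
    (hvY1 : variance Y (μ[|{ω | U ω = 1}]) = a)
    (hc1 : ecov (μ[|{ω | U ω = 1}]) ⊥ X Y = η * Real.sqrt (a * b)) :
    condPearson μ (MeasurableSpace.comap U inferInstance) X Y
      = 2 * η * Real.sqrt (a * b) / (a + b) ∧
    2 * η * Real.sqrt (a * b) / (a + b) < η := by
  classical
  have hb : 0 < b := lt_trans ha hab
  have hm' : MeasurableSpace.comap U inferInstance ≤ mΩ := measurable_iff_comap_le.mp hU
  set A₀ : Set Ω := {ω | U ω = 0} with hA0def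
  set A₁ : Set Ω := {ω | U ω = 1} with hA1def
  have hmA₀ : MeasurableSet A₀ := hU (measurableSet_singleton 0)
  have hmA₁ : MeasurableSet A₁ := hU (measurableSet_singleton 1)
  have hdisj : Disjoint A₀ A₁ := by
    rw [Set.disjoint_left]
    rintro ω (h0' : U ω = 0) (h1' : U ω = 1)
    rw [h0'] at h1'; norm_num at h1'
  have hae : ∀ᵐ ω ∂μ, ω ∈ A₀ ∪ A₁ := by
    filter_upwards [hU01] with ω hω
    rcases hω with h | h
    · exact Or.inl h
    · exact Or.inr h
  have hnull : μ (A₀ ∪ A₁)ᶜ = 0 := by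
    rw [measure_eq_zero_iff_ae_notMem]
    filter_upwards [hae] with ω hω
    exact fun hc => hc hω
  set ν₀ := μ[|A₀] with hν₀def
  set ν₁ := μ[|A₁] with hν₁def
  -- integral with respect to a conditional measure
  have hcondint : ∀ (A : Set Ω), μ A = 1/2 → ∀ f : Ω → ℝ,
      ∫ ω, f ω ∂(μ[|A]) = 2 * ∫ ω in A, f ω ∂μ := by
    intro A hA f
    show ∫ ω, f ω ∂((μ A)⁻¹ • μ.restrict A) = _
    rw [integral_smul_measure, hA, one_div, inv_inv, smul_eq_mul]
    norm_num
  have hmemcond : ∀ (A : Set Ω), μ A = 1/2 → ∀ f : Ω → ℝ, MemLp f 2 μ →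
      MemLp f 2 (μ[|A]) := by
    intro A hA f hf
    refine (hf.restrict A).smul_measure ?_
    rw [hA, one_div, inv_inv]
    exact ENNReal.ofNat_ne_top
  have haecond : ∀ (A : Set Ω), MeasurableSet A → ∀ᵐ ω ∂(μ[|A]), ω ∈ A :=
    fun A hA => Measure.ae_smul_measure (ae_restrict_mem hA) _
  -- splitting set integrals over preimages
  have hsplitset : ∀ f : Ω → ℝ, Integrable f μ → ∀ S : Set ℝ, MeasurableSet S →
      ∫ ω in U ⁻¹' S, f ω ∂μ =
        (if (0:ℝ) ∈ S then ∫ ω in A₀, f ω ∂μ else 0)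
        + (if (1:ℝ) ∈ S then ∫ ω in A₁, f ω ∂μ else 0) := by
    intro f hf S hS
    have hseq : U ⁻¹' S =ᵐ[μ] (((U ⁻¹' S ∩ A₀) ∪ (U ⁻¹' S ∩ A₁) : Set Ω)) := by
      filter_upwards [hae] with ω hω
      change (ω ∈ U ⁻¹' S) = (ω ∈ (U ⁻¹' S ∩ A₀) ∪ (U ⁻¹' S ∩ A₁))
      simp only [eq_iff_iff, Set.mem_union, Set.mem_inter_iff, Set.mem_preimage]
      constructor
      · intro hs
        rcases hω with h | h
        · exact Or.inl ⟨hs, h⟩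
        · exact Or.inr ⟨hs, h⟩
      · rintro (⟨hs, _⟩ | ⟨hs, _⟩) <;> exact hs
    rw [setIntegral_congr_set hseq,
      setIntegral_union (hdisj.mono Set.inter_subset_right Set.inter_subset_right)
        ((hU hS).inter hmA₁) hf.integrableOn hf.integrableOn]
    have h₀ : U ⁻¹' S ∩ A₀ = (if (0:ℝ) ∈ S then A₀ else ∅) := by
      split_ifs with h
      · ext ω
        constructor
        · rintro ⟨_, h2⟩; exact h2
        · intro h2
          refine ⟨?_, h2⟩
          have : U ω = 0 := h2
          simp only [Set.mem_preimage, this]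
          exact h
      · ext ω
        constructor
        · rintro ⟨h1', h2⟩
          have : U ω = 0 := h2
          rw [Set.mem_preimage, this] at h1'
          exact absurd h1' h
        · intro h2; exact absurd h2 (Set.notMem_empty ω)
    have h₁ : U ⁻¹' S ∩ A₁ = (if (1:ℝ) ∈ S then A₁ else ∅) := by
      split_ifs with h
      · ext ω
        constructor
        · rintro ⟨_, h2⟩; exact h2
        · intro h2
          refine ⟨?_, h2⟩
          have : U ω = 1 := h2
          simp only [Set.mem_preimage, this]
          exact h
      · ext ω
        constructor
        · rintro ⟨h1', h2⟩
          have : U ω = 1 := h2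
          rw [Set.mem_preimage, this] at h1'
          exact absurd h1' h
        · intro h2; exact absurd h2 (Set.notMem_empty ω)
    rw [h₀, h₁]
    split_ifs <;> simp
  -- splitting the full integral
  have hsplit : ∀ f : Ω → ℝ, Integrable f μ →
      ∫ ω, f ω ∂μ = (∫ ω in A₀, f ω ∂μ) + ∫ ω in A₁, f ω ∂μ := by
    intro f hf
    rw [← integral_add_compl (hmA₀.union hmA₁) hf,
      setIntegral_union hdisj hmA₁ hf.integrableOn hf.integrableOn,
      setIntegral_measure_zero _ hnull, add_zero]
  -- boundedness of step functions
  have hstep2 : ∀ c₀ c₁ : ℝ, MemLp (fun ω => if U ω = 0 then c₀ else c₁) 2 μ := by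
    intro c₀ c₁
    have hgmeas : Measurable fun ω => if U ω = 0 then c₀ else c₁ :=
      Measurable.ite hmA₀ measurable_const measurable_const
    refine MemLp.of_bound hgmeas.aestronglyMeasurable (max ‖c₀‖ ‖c₁‖) ?_
    refine Filter.Eventually.of_forall fun ω => ?_
    by_cases h : U ω = 0 <;> simp [h, le_max_left, le_max_right]
  -- the conditional expectation is the step function
  have hce : ∀ f : Ω → ℝ, MemLp f 2 μ →
      (fun ω => if U ω = 0 then ∫ x, f x ∂ν₀ else ∫ x, f x ∂ν₁) =ᵐ[μ] μ[f|MeasurableSpace.comap U inferInstance] := by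
    intro f hf2
    have hfint : Integrable f μ := hf2.integrable one_le_two
    set c₀ := ∫ x, f x ∂ν₀ with hc₀def
    set c₁ := ∫ x, f x ∂ν₁ with hc₁def
    set g : Ω → ℝ := fun ω => if U ω = 0 then c₀ else c₁ with hgdef
    have hg2 : MemLp g 2 μ := hstep2 c₀ c₁
    have hgint : Integrable g μ := hg2.integrable one_le_two
    have hgmeas' : Measurable[MeasurableSpace.comap U inferInstance] g := by
      have hUm : Measurable[MeasurableSpace.comap U inferInstance] U :=
        measurable_iff_comap_le.mpr le_rfl
      exact Measurable.ite (hUm (measurableSet_singleton 0)) measurable_const measurable_const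
    have key : ∀ A : Set Ω, MeasurableSet A → μ A = 1/2 →
        (∀ ω ∈ A, g ω = ∫ x, f x ∂(μ[|A])) →
        ∫ ω in A, g ω ∂μ = ∫ ω in A, f ω ∂μ := by
      intro A hA hAm hgA
      rw [setIntegral_congr_fun hA hgA, setIntegral_const, hcondint A hAm f, measureReal_def, hAm, smul_eq_mul,
        ENNReal.toReal_div]
      norm_num
      ring
    have hkey0 : ∫ ω in A₀, g ω ∂μ = ∫ ω in A₀, f ω ∂μ := by
      refine key A₀ hmA₀ h0 fun ω hω => ?_
      have hU0 : U ω = 0 := hω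
      simp [g, hU0, hc₀def, hν₀def]
    have hkey1 : ∫ ω in A₁, g ω ∂μ = ∫ ω in A₁, f ω ∂μ := by
      refine key A₁ hmA₁ h1 fun ω hω => ?_
      have hU1 : U ω = 1 := hω
      have hne : U ω ≠ 0 := by rw [hU1]; norm_num
      simp [g, hne, hc₁def, hν₁def]
    refine ae_eq_condExp_of_forall_setIntegral_eq hm' hfint
      (fun s _ _ => hgint.integrableOn) ?_ ?_
    · rintro s ⟨S, hS, rfl⟩ _
      rw [hsplitset g hgint S hS, hsplitset f hfint S hS, hkey0, hkey1]
    · exact (Measurable.stronglyMeasurable hgmeas').aestronglyMeasurable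
  -- the generic expected conditional covariance computation
  have hgen : ∀ f h : Ω → ℝ, MemLp f 2 μ → MemLp h 2 μ →
      ∫ ω, (f ω - (μ[f|MeasurableSpace.comap U inferInstance]) ω) * (h ω - (μ[h|MeasurableSpace.comap U inferInstance]) ω) ∂μ
        = (1/2) * ∫ ω, (f ω - ∫ x, f x ∂ν₀) * (h ω - ∫ x, h x ∂ν₀) ∂ν₀
          + (1/2) * ∫ ω, (f ω - ∫ x, f x ∂ν₁) * (h ω - ∫ x, h x ∂ν₁) ∂ν₁ := by
    intro f h hf2 hh2
    set gf : Ω → ℝ := fun ω => if U ω = 0 then ∫ x, f x ∂ν₀ else ∫ x, f x ∂ν₁ with hgfdef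
    set gh : Ω → ℝ := fun ω => if U ω = 0 then ∫ x, h x ∂ν₀ else ∫ x, h x ∂ν₁ with hghdef
    have hcef : gf =ᵐ[μ] μ[f|MeasurableSpace.comap U inferInstance] := hce f hf2
    have hceh : gh =ᵐ[μ] μ[h|MeasurableSpace.comap U inferInstance] := hce h hh2
    have step1 : ∫ ω, (f ω - (μ[f|MeasurableSpace.comap U inferInstance]) ω) * (h ω - (μ[h|MeasurableSpace.comap U inferInstance]) ω) ∂μ
        = ∫ ω, (f ω - gf ω) * (h ω - gh ω) ∂μ := by
      refine integral_congr_ae ?_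
      filter_upwards [hcef, hceh] with ω e1 e2
      rw [e1, e2]
    have hint : Integrable (fun ω => (f ω - gf ω) * (h ω - gh ω)) μ :=
      memLp_mul_integrable (hf2.sub (hstep2 _ _)) (hh2.sub (hstep2 _ _))
    have step3 : ∫ ω, (f ω - gf ω) * (h ω - gh ω) ∂μ
        = (1/2) * ∫ ω, (f ω - gf ω) * (h ω - gh ω) ∂ν₀
          + (1/2) * ∫ ω, (f ω - gf ω) * (h ω - gh ω) ∂ν₁ := by
      rw [hsplit _ hint, hν₀def, hν₁def, hcondint A₀ h0 _, hcondint A₁ h1 _]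
      ring
    have step4 : ∫ ω, (f ω - gf ω) * (h ω - gh ω) ∂ν₀
        = ∫ ω, (f ω - ∫ x, f x ∂ν₀) * (h ω - ∫ x, h x ∂ν₀) ∂ν₀ := by
      refine integral_congr_ae ?_
      filter_upwards [haecond A₀ hmA₀] with ω hω
      have hU0 : U ω = 0 := hω
      simp [gf, gh, hU0]
    have step5 : ∫ ω, (f ω - gf ω) * (h ω - gh ω) ∂ν₁
        = ∫ ω, (f ω - ∫ x, f x ∂ν₁) * (h ω - ∫ x, h x ∂ν₁) ∂ν₁ := by
      refine integral_congr_ae ?_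
      filter_upwards [haecond A₁ hmA₁] with ω hω
      have hU1 : U ω = 1 := hω
      have hne : U ω ≠ 0 := by rw [hU1]; norm_num
      simp [gf, gh, hne]
    rw [step1, step3, step4, step5]
  -- evaluating the three quantities
  have hvar : ∀ (A : Set Ω), μ A = 1/2 → ∀ f : Ω → ℝ, MemLp f 2 μ →
      ∫ ω, (f ω - ∫ x, f x ∂(μ[|A])) * (f ω - ∫ x, f x ∂(μ[|A])) ∂(μ[|A])
        = variance f (μ[|A]) := by
    intro A hA f hf2
    have hprob : IsProbabilityMeasure (μ[|A]) := by
      refine cond_isProbabilityMeasure ?_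
      rw [hA]
      simp
    rw [variance_eq_integral (hmemcond A hA f hf2).aestronglyMeasurable.aemeasurable]
    refine integral_congr_ae (Filter.Eventually.of_forall fun ω => ?_)
    simp [sq]
  have hEX : evar μ (MeasurableSpace.comap U inferInstance) X = (a + b) / 2 := by
    rw [evar]
    simp_rw [sq]
    rw [hgen X X hX2 hX2, hν₀def, hν₁def, hvar A₀ h0 X hX2, hvar A₁ h1 X hX2, hvX0, hvX1]
    ring
  have hEY : evar μ (MeasurableSpace.comap U inferInstance) Y = (a + b) / 2 := by
    rw [evar]
    simp_rw [sq]
    rw [hgen Y Y hY2 hY2, hν₀def, hν₁def, hvar A₀ h0 Y hY2, hvar A₁ h1 Y hY2, hvY0, hvY1]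
    ring
  have hprob0 : IsProbabilityMeasure ν₀ := by
    refine cond_isProbabilityMeasure ?_
    rw [h0]; simp
  have hprob1 : IsProbabilityMeasure ν₁ := by
    refine cond_isProbabilityMeasure ?_
    rw [h1]; simp
  have hEC : ecov μ (MeasurableSpace.comap U inferInstance) X Y = η * Real.sqrt (a * b) := by
    rw [ecov, hgen X Y hX2 hY2]
    rw [ecov, condExp_bot, condExp_bot] at hc0 hc1
    rw [hc0, hc1]
    ring
  have habpos : (0:ℝ) < (a + b) / 2 := by linarith
  have habne : a + b ≠ 0 := by linarith
  constructor
  · rw [condPearson, hEX, hEY, hEC, if_pos ⟨habpos, habpos⟩,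
      Real.mul_self_sqrt habpos.le]
    field_simp
  · have hs : Real.sqrt (a * b) = Real.sqrt a * Real.sqrt b := Real.sqrt_mul ha.le b
    have h1' : Real.sqrt a < Real.sqrt b := Real.sqrt_lt_sqrt ha.le hab
    have h2' : 0 < (Real.sqrt b - Real.sqrt a) ^ 2 := pow_pos (sub_pos.mpr h1') 2
    rw [hs, div_lt_iff₀ (by linarith : (0:ℝ) < a + b)]
    nlinarith [Real.sq_sqrt ha.le, Real.sq_sqrt hb.le, mul_pos hη h2',
      Real.sqrt_nonneg a, Real.sqrt_nonneg b]

end CondCorr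
end
end

section
/- (Conditioning reduces covariance gap) For square-integrable real random variables X, Y and any random variable U: √(E[var(X|U)]·E[var(Y|U)]) − E[cov(X,Y|U)] ≤ √(var(X)·var(Y)) − cov(X,Y). -/
open MeasureTheory ProbabilityTheory

noncomputable section

namespace CondCorr

variable {Ω : Type*} [mΩ : MeasurableSpace Ω] {μ : Measure Ω}

lemma integrable_mul_of_memL2 {f g : Ω → ℝ} (hf : MemLp f 2 μ) (hg : MemLp g 2 μ) :
    Integrable (fun ω => f ω * g ω) μ := by
  refine Integrable.mono' (((hf.integrable_sq.add hg.integrable_sq).const_mul (1/2 : ℝ)))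
    (hf.aestronglyMeasurable.mul hg.aestronglyMeasurable) ?_
  filter_upwards with ω
  simp only [Real.norm_eq_abs, abs_mul, Pi.add_apply]
  nlinarith [sq_nonneg (|f ω| - |g ω|), sq_abs (f ω), sq_abs (g ω), abs_nonneg (f ω),
    abs_nonneg (g ω)]

lemma integral_mul_le_sqrt {f g : Ω → ℝ} (hf : MemLp f 2 μ) (hg : MemLp g 2 μ) :
    ∫ ω, f ω * g ω ∂μ ≤ Real.sqrt ((∫ ω, f ω ^ 2 ∂μ) * ∫ ω, g ω ^ 2 ∂μ) := by
  set A := ∫ ω, f ω ^ 2 ∂μ with hA_def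
  set B := ∫ ω, g ω ^ 2 ∂μ with hB_def
  have hA : 0 ≤ A := integral_nonneg fun ω => sq_nonneg _
  have hB : 0 ≤ B := integral_nonneg fun ω => sq_nonneg _
  have key : ∀ {u v : Ω → ℝ}, MemLp u 2 μ → MemLp v 2 μ →
      (∫ ω, u ω ^ 2 ∂μ) = 0 → ∫ ω, u ω * v ω ∂μ = 0 := by
    intro u v hu hv h0
    have hu0 : (fun ω => u ω ^ 2) =ᵐ[μ] 0 :=
      (integral_eq_zero_iff_of_nonneg (fun ω => sq_nonneg (u ω)) hu.integrable_sq).mp h0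
    rw [← integral_zero Ω ℝ (μ := μ)]
    refine integral_congr_ae ?_
    filter_upwards [hu0] with ω hω
    simp only [Pi.zero_apply] at hω ⊢
    have : u ω = 0 := by
      have := sq_abs (u ω)
      nlinarith [abs_nonneg (u ω)]
    simp [this]
  rcases eq_or_lt_of_le hA with hA0 | hA0
  · rw [key hf hg hA0.symm]; positivity
  rcases eq_or_lt_of_le hB with hB0 | hB0
  · have h : ∫ ω, f ω * g ω ∂μ = 0 := by
      rw [integral_congr_ae (Filter.Eventually.of_forall fun ω => mul_comm (f ω) (g ω))]
      exact key hg hf hB0.symm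
    rw [h]; positivity
  set t := Real.sqrt B / Real.sqrt A with ht_def
  have hsA : 0 < Real.sqrt A := Real.sqrt_pos.mpr hA0
  have hsB : 0 < Real.sqrt B := Real.sqrt_pos.mpr hB0
  have ht : 0 < t := div_pos hsB hsA
  have hint : Integrable (fun ω => (t * f ω ^ 2 + g ω ^ 2 / t) / 2) μ :=
    ((hf.integrable_sq.const_mul t).add (hg.integrable_sq.div_const t)).div_const 2
  have hle : ∫ ω, f ω * g ω ∂μ ≤ ∫ ω, (t * f ω ^ 2 + g ω ^ 2 / t) / 2 ∂μ := by
    refine integral_mono (integrable_mul_of_memL2 hf hg) hint fun ω => ?_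
    have e : (t * f ω ^ 2 + g ω ^ 2 / t) / 2 = (t ^ 2 * f ω ^ 2 + g ω ^ 2) / (2 * t) := by
      field_simp
    rw [e, le_div_iff₀ (by positivity)]
    nlinarith [sq_nonneg (t * f ω - g ω)]
  have heval : ∫ ω, (t * f ω ^ 2 + g ω ^ 2 / t) / 2 ∂μ = Real.sqrt (A * B) := by
    rw [integral_div, integral_add (hf.integrable_sq.const_mul t) (hg.integrable_sq.div_const t),
      integral_const_mul, integral_div, ← hA_def, ← hB_def, Real.sqrt_mul hA, ht_def]
    have ha : Real.sqrt A * Real.sqrt A = A := Real.mul_self_sqrt hA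
    have hb : Real.sqrt B * Real.sqrt B = B := Real.mul_self_sqrt hB
    field_simp
    linear_combination (B - 2 * (Real.sqrt B * Real.sqrt B)) * ha - A * hb
  linarith [hle, heval.le, heval.ge]

end CondCorr

namespace CondCorr

variable {Ω : Type*} [mΩ : MeasurableSpace Ω] {μ : Measure Ω}

lemma memℒp_two_condexp {m : MeasurableSpace Ω} (hm : m ≤ mΩ) [IsProbabilityMeasure μ]
    {f : Ω → ℝ} (hf : MemLp f 2 μ) : MemLp (μ[f|m]) 2 μ := by
  letI := mΩ
  haveI hfin : IsFiniteMeasure μ := inferInstance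
  haveI : SigmaFinite (μ.trim hm) := inferInstance
  set g : Lp ℝ 2 μ := ↑(condExpL2 ℝ ℝ hm (hf.toLp f)) with hg_def
  have hae : (g : Ω → ℝ) =ᵐ[μ] μ[f|m] := by
    refine ae_eq_condExp_of_forall_setIntegral_eq hm (hf.integrable one_le_two)
      (fun s _ _ => (integrable_condExpL2_of_isFiniteMeasure hm).integrableOn)
      (fun s hs hμs => ?_) (aestronglyMeasurable_condExpL2 hm _)
    rw [integral_condExpL2_eq hm (hf.toLp f) hs hμs.ne]
    exact setIntegral_congr_ae (hm s hs) ((hf.coeFn_toLp).mono fun x hx _ => hx)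
  exact (Lp.memLp g).ae_eq hae

lemma integral_mul_eq_zero_of_condexp_zero {m : MeasurableSpace Ω} (hm : m ≤ mΩ)
    [IsProbabilityMeasure μ] {g D : Ω → ℝ} (hgm : StronglyMeasurable[m] g)
    (hg2 : MemLp g 2 μ) (hD2 : MemLp D 2 μ) (hD0 : μ[D|m] =ᵐ[μ] 0) :
    ∫ ω, g ω * D ω ∂μ = 0 := by
  letI := mΩ
  haveI hfin : IsFiniteMeasure μ := inferInstance
  haveI : SigmaFinite (μ.trim hm) := inferInstance
  have hint : Integrable (g * D) μ := integrable_mul_of_memL2 hg2 hD2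
  have h1 : μ[g * D|m] =ᵐ[μ] g * μ[D|m] :=
    condExp_mul_of_stronglyMeasurable_left hgm hint (hD2.integrable one_le_two)
  have h2 : μ[g * D|m] =ᵐ[μ] 0 := by
    filter_upwards [h1, hD0] with ω h1ω h2ω
    simp only [Pi.mul_apply, Pi.zero_apply] at *
    rw [h1ω, h2ω, mul_zero]
  calc ∫ ω, g ω * D ω ∂μ = ∫ ω, (μ[g * D|m]) ω ∂μ := (integral_condExp hm).symm
    _ = ∫ ω, (0 : Ω → ℝ) ω ∂μ := integral_congr_ae h2
    _ = 0 := by simp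

lemma sqrt_add_ineq {a b a' b' : ℝ} (ha : 0 ≤ a) (hb : 0 ≤ b) (ha' : 0 ≤ a') (hb' : 0 ≤ b') :
    Real.sqrt (a * b) + Real.sqrt (a' * b') ≤ Real.sqrt ((a + a') * (b + b')) := by
  rw [Real.le_sqrt (by positivity) (by positivity)]
  have h1 : Real.sqrt (a * b) ^ 2 = a * b := Real.sq_sqrt (by positivity)
  have h2 : Real.sqrt (a' * b') ^ 2 = a' * b' := Real.sq_sqrt (by positivity)
  have h3 : Real.sqrt (a * b) * Real.sqrt (a' * b') = Real.sqrt (a * b') * Real.sqrt (a' * b) := by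
    rw [← Real.sqrt_mul (by positivity), ← Real.sqrt_mul (by positivity)]
    ring_nf
  have h4 : Real.sqrt (a * b') ^ 2 = a * b' := Real.sq_sqrt (by positivity)
  have h5 : Real.sqrt (a' * b) ^ 2 = a' * b := Real.sq_sqrt (by positivity)
  nlinarith [sq_nonneg (Real.sqrt (a * b') - Real.sqrt (a' * b))]

end CondCorr

namespace CondCorr

/-- Conditioning reduces the covariance gap:
`√(E[var(X|U)]·E[var(Y|U)]) − E[cov(X,Y|U)] ≤ √(var(X)·var(Y)) − cov(X,Y)`. -/
theorem conditioning_reduces_cov_gap {Ω : Type*} [mΩ : MeasurableSpace Ω]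
    (μ : Measure Ω) [IsProbabilityMeasure μ] {γ : Type*} [MeasurableSpace γ]
    (X Y : Ω → ℝ) (U : Ω → γ)
    (hX : Measurable X) (hY : Measurable Y) (hU : Measurable U)
    (hX2 : MemLp X 2 μ) (hY2 : MemLp Y 2 μ) :
    Real.sqrt (evar μ (MeasurableSpace.comap U inferInstance) X *
        evar μ (MeasurableSpace.comap U inferInstance) Y)
      - ecov μ (MeasurableSpace.comap U inferInstance) X Y
    ≤ Real.sqrt (variance X μ * variance Y μ)
      - ∫ ω, (X ω - ∫ x, X x ∂μ) * (Y ω - ∫ x, Y x ∂μ) ∂μ := by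
  set m := MeasurableSpace.comap U inferInstance with hm_def
  letI := mΩ
  have hm : m ≤ mΩ := hU.comap_le
  have hcX2 : MemLp (μ[X|m]) 2 μ := memℒp_two_condexp hm hX2
  have hcY2 : MemLp (μ[Y|m]) 2 μ := memℒp_two_condexp hm hY2
  set DX : Ω → ℝ := fun ω => X ω - (μ[X|m]) ω with hDX_def
  set DY : Ω → ℝ := fun ω => Y ω - (μ[Y|m]) ω with hDY_def
  set MX : Ω → ℝ := fun ω => (μ[X|m]) ω - ∫ x, X x ∂μ with hMX_def
  set MY : Ω → ℝ := fun ω => (μ[Y|m]) ω - ∫ x, Y x ∂μ with hMY_def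
  have hDX2 : MemLp DX 2 μ := hX2.sub hcX2
  have hDY2 : MemLp DY 2 μ := hY2.sub hcY2
  have hMX2 : MemLp MX 2 μ := hcX2.sub (memLp_const _)
  have hMY2 : MemLp MY 2 μ := hcY2.sub (memLp_const _)
  have hMXm : StronglyMeasurable[m] MX :=
    stronglyMeasurable_condExp.sub stronglyMeasurable_const
  have hMYm : StronglyMeasurable[m] MY :=
    stronglyMeasurable_condExp.sub stronglyMeasurable_const
  have hDX0 : μ[DX|m] =ᵐ[μ] 0 := by
    have h1 := condExp_sub (m := m) (μ := μ) (f := X) (g := μ[X|m])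
      (hX2.integrable one_le_two) (hcX2.integrable one_le_two)
    rw [condExp_of_stronglyMeasurable hm stronglyMeasurable_condExp
      (hcX2.integrable one_le_two)] at h1
    filter_upwards [h1] with ω hω
    have h2 : (μ[X - μ[X|m]|m]) ω = 0 := by
      rw [hω]; simp
    exact h2
  have hDY0 : μ[DY|m] =ᵐ[μ] 0 := by
    have h1 := condExp_sub (m := m) (μ := μ) (f := Y) (g := μ[Y|m])
      (hY2.integrable one_le_two) (hcY2.integrable one_le_two)
    rw [condExp_of_stronglyMeasurable hm stronglyMeasurable_condExp
      (hcY2.integrable one_le_two)] at h1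
    filter_upwards [h1] with ω hω
    have h2 : (μ[Y - μ[Y|m]|m]) ω = 0 := by
      rw [hω]; simp
    exact h2
  have oXX : ∫ ω, MX ω * DX ω ∂μ = 0 :=
    integral_mul_eq_zero_of_condexp_zero hm hMXm hMX2 hDX2 hDX0
  have oXY : ∫ ω, MX ω * DY ω ∂μ = 0 :=
    integral_mul_eq_zero_of_condexp_zero hm hMXm hMX2 hDY2 hDY0
  have oYX : ∫ ω, MY ω * DX ω ∂μ = 0 :=
    integral_mul_eq_zero_of_condexp_zero hm hMYm hMY2 hDX2 hDX0
  have oYY : ∫ ω, MY ω * DY ω ∂μ = 0 :=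
    integral_mul_eq_zero_of_condexp_zero hm hMYm hMY2 hDY2 hDY0
  have ha : (0:ℝ) ≤ ∫ ω, DX ω ^ 2 ∂μ := integral_nonneg fun ω => sq_nonneg _
  have hb : (0:ℝ) ≤ ∫ ω, DY ω ^ 2 ∂μ := integral_nonneg fun ω => sq_nonneg _
  have ha' : (0:ℝ) ≤ ∫ ω, MX ω ^ 2 ∂μ := integral_nonneg fun ω => sq_nonneg _
  have hb' : (0:ℝ) ≤ ∫ ω, MY ω ^ 2 ∂μ := integral_nonneg fun ω => sq_nonneg _
  have hvar : ∀ (Z : Ω → ℝ) (hZ2 : MemLp Z 2 μ) (DZ MZ : Ω → ℝ)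
      (hDZ2 : MemLp DZ 2 μ) (hMZ2 : MemLp MZ 2 μ)
      (hsum : ∀ ω, Z ω - ∫ x, Z x ∂μ = DZ ω + MZ ω)
      (o : ∫ ω, MZ ω * DZ ω ∂μ = 0),
      variance Z μ = (∫ ω, DZ ω ^ 2 ∂μ) + ∫ ω, MZ ω ^ 2 ∂μ := by
    intro Z hZ2 DZ MZ hDZ2 hMZ2 hsum o
    have e1 : (∫ ω, (Z ω - ∫ x, Z x ∂μ) ^ 2 ∂μ)
        = ∫ ω, (DZ ω ^ 2 + MZ ω ^ 2 + 2 * (MZ ω * DZ ω)) ∂μ :=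
      integral_congr_ae (Filter.Eventually.of_forall fun ω => by simp only [hsum ω]; ring)
    have hAB : Integrable (fun ω => DZ ω ^ 2 + MZ ω ^ 2) μ :=
      hDZ2.integrable_sq.add hMZ2.integrable_sq
    have hC : Integrable (fun ω => 2 * (MZ ω * DZ ω)) μ :=
      (integrable_mul_of_memL2 hMZ2 hDZ2).const_mul 2
    calc variance Z μ = ∫ ω, (Z ω - ∫ x, Z x ∂μ) ^ 2 ∂μ := variance_eq_integral hZ2.aemeasurable
      _ = ∫ ω, (DZ ω ^ 2 + MZ ω ^ 2 + 2 * (MZ ω * DZ ω)) ∂μ := e1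
      _ = (∫ ω, (DZ ω ^ 2 + MZ ω ^ 2) ∂μ) + ∫ ω, 2 * (MZ ω * DZ ω) ∂μ :=
          integral_add hAB hC
      _ = ((∫ ω, DZ ω ^ 2 ∂μ) + ∫ ω, MZ ω ^ 2 ∂μ) + 2 * ∫ ω, MZ ω * DZ ω ∂μ := by
          rw [integral_add hDZ2.integrable_sq hMZ2.integrable_sq, integral_const_mul]
      _ = (∫ ω, DZ ω ^ 2 ∂μ) + ∫ ω, MZ ω ^ 2 ∂μ := by rw [o]; ring
  have hvarX : variance X μ = (∫ ω, DX ω ^ 2 ∂μ) + ∫ ω, MX ω ^ 2 ∂μ :=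
    hvar X hX2 DX MX hDX2 hMX2 (fun ω => by simp only [hDX_def, hMX_def]; ring) oXX
  have hvarY : variance Y μ = (∫ ω, DY ω ^ 2 ∂μ) + ∫ ω, MY ω ^ 2 ∂μ :=
    hvar Y hY2 DY MY hDY2 hMY2 (fun ω => by simp only [hDY_def, hMY_def]; ring) oYY
  have hcov : (∫ ω, (X ω - ∫ x, X x ∂μ) * (Y ω - ∫ x, Y x ∂μ) ∂μ)
      = (∫ ω, DX ω * DY ω ∂μ) + ∫ ω, MX ω * MY ω ∂μ := by
    have e1 : (∫ ω, (X ω - ∫ x, X x ∂μ) * (Y ω - ∫ x, Y x ∂μ) ∂μ)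
        = ∫ ω, (DX ω * DY ω + MX ω * MY ω + (MX ω * DY ω + MY ω * DX ω)) ∂μ :=
      integral_congr_ae (Filter.Eventually.of_forall fun ω => by
        simp only [hDX_def, hMX_def, hDY_def, hMY_def]; ring)
    have h1 : Integrable (fun ω => DX ω * DY ω + MX ω * MY ω) μ :=
      (integrable_mul_of_memL2 hDX2 hDY2).add (integrable_mul_of_memL2 hMX2 hMY2)
    have h2 : Integrable (fun ω => MX ω * DY ω + MY ω * DX ω) μ :=
      (integrable_mul_of_memL2 hMX2 hDY2).add (integrable_mul_of_memL2 hMY2 hDX2)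
    rw [e1, integral_add h1 h2,
      integral_add (integrable_mul_of_memL2 hDX2 hDY2) (integrable_mul_of_memL2 hMX2 hMY2),
      integral_add (integrable_mul_of_memL2 hMX2 hDY2) (integrable_mul_of_memL2 hMY2 hDX2),
      oXY, oYX]
    ring
  have hevarX : evar μ m X = ∫ ω, DX ω ^ 2 ∂μ := rfl
  have hevarY : evar μ m Y = ∫ ω, DY ω ^ 2 ∂μ := rfl
  have hecov : ecov μ m X Y = ∫ ω, DX ω * DY ω ∂μ := rfl
  have key := sqrt_add_ineq ha hb ha' hb'
  have hc' : (∫ ω, MX ω * MY ω ∂μ)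
      ≤ Real.sqrt ((∫ ω, MX ω ^ 2 ∂μ) * ∫ ω, MY ω ^ 2 ∂μ) :=
    integral_mul_le_sqrt hMX2 hMY2
  rw [hevarX, hevarY, hecov, hvarX, hvarY, hcov]
  linarith

end CondCorr
end
end
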